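/- Block setting: E := ∏_{i=1}^M ℝ^{n_i} with the ℓ² product inner product, A_i ∈ ℝ^{p×n_i}, Ax := ∑_i A_i x_i, f : E → ℝ convex differentiable which is (m, L_m)-blockwise smooth, g_i : ℝ^{n_i} → ℝ μ-strongly convex with μ ≥ 0, g(x) := ∑_i g_i(x_i), F := f + g, θ := m/M. Let W be a block diagonal operator on E with each diagonal block W_i a symmetric positive semidefinite n_i×n_i matrix. Let x° ∈ E, λ°, r° ∈ ℝ^p, β ∈ ℝ. For each S ∈ 𝒮_m let x⁺(S) ∈ E satisfy: x⁺(S)_i = x°_i for i ∉ S, and for each i ∈ S there is a subgradient v_i of g_i at x⁺(S)_i with ∇_i f(x°) + v_i − A_iᵀ(λ° − β r°) + W_i(x⁺(S)_i − x°_i) = 0. Then for every x ∈ E: E_S[ F(x⁺) − F(x) + (μ/2)‖x⁺ − x‖² − ⟨A(x⁺ − x), λ° − β r°⟩ ] ≤ (1 − θ)( F(x°) − F(x) + (μ/2)‖x° − x‖² − ⟨A(x° − x), λ° − β r°⟩ ) − (1/2) E_S[ ‖x⁺ − x‖²_W − ‖x° − x‖²_W + ‖x⁺ − x°‖²_{W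 − L_m I} ], where E_S denotes the average over all S ∈ 𝒮_m. -/

import Mathlib

open Set Filter Topology

section Helpers

lemma grad_convex_le {H : Type*} [NormedAddCommGroup H] [InnerProductSpace ℝ H] [CompleteSpace H]
    {f : H → ℝ} (hf : ConvexOn ℝ Set.univ f) {y G : H} (hG : HasGradientAt f G y) (z : H) :
    f y + inner ℝ G (z - y) ≤ f z := by
  set d := z - y with hd
  have hcurve : HasDerivAt (fun t : ℝ => y + t • d) d (0:ℝ) := by
    simpa using ((hasDerivAt_id (0:ℝ)).smul_const d).const_add y
  have hF : HasFDerivAt f (InnerProductSpace.toDual ℝ H G) y :=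
    hasGradientAt_iff_hasFDerivAt.mp hG
  have hψ : HasDerivAt (fun t : ℝ => f (y + t • d)) (inner ℝ G d : ℝ) 0 := by
    have h0 : y + (0:ℝ) • d = y := by simp
    have := (h0 ▸ hF : HasFDerivAt f _ (y + (0:ℝ) • d)).comp_hasDerivAt 0 hcurve
    simp only [InnerProductSpace.toDual_apply_apply] at this
    exact this
  have hslope := hasDerivAt_iff_tendsto_slope.mp hψ
  have hmono : Tendsto (slope (fun t : ℝ => f (y + t • d)) 0) (𝓝[>] (0:ℝ)) (𝓝 (inner ℝ G d : ℝ)) :=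
    hslope.mono_left (nhdsWithin_mono _ (fun t ht => ne_of_gt ht))
  have hev : ∀ᶠ t in 𝓝[>] (0:ℝ), slope (fun t : ℝ => f (y + t • d)) 0 t ≤ f z - f y := by
    filter_upwards [Ioc_mem_nhdsGT_of_mem (by constructor <;> norm_num : (0:ℝ) ∈ Set.Ico (0:ℝ) 1)]
      with t ht
    have ht0 : 0 < t := ht.1
    have ht1 : t ≤ 1 := ht.2
    have harg : y + t • d = (1 - t) • y + t • z := by rw [hd]; module
    have hcv := hf.2 (Set.mem_univ y) (Set.mem_univ z) (by linarith : (0:ℝ) ≤ 1 - t)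
      (le_of_lt ht0) (by ring)
    simp only [smul_eq_mul] at hcv
    rw [slope_def_field]
    simp only [sub_zero, zero_smul, add_zero]
    rw [harg]
    rw [div_le_iff₀ ht0]
    nlinarith [hcv]
  have hle := le_of_tendsto hmono hev
  linarith

lemma strong_subgrad {H : Type*} [NormedAddCommGroup H] [InnerProductSpace ℝ H]
    {g : H → ℝ} {μ : ℝ} (hμ : 0 ≤ μ)
    (hg : ConvexOn ℝ Set.univ (fun z => g z - μ / 2 * ‖z‖ ^ 2))
    {y v : H} (hv : ∀ z, g y + inner ℝ v (z - y) ≤ g z) (z : H) :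
    g y + inner ℝ v (z - y) + μ / 2 * ‖z - y‖ ^ 2 ≤ g z := by
  have core : ∀ t : ℝ, 0 < t → t ≤ 1 →
      g y + inner ℝ v (z - y) + (1 - t) * (μ / 2 * ‖z - y‖ ^ 2) ≤ g z := by
    intro t ht0 ht1
    have hcv := hg.2 (Set.mem_univ y) (Set.mem_univ z) (by linarith : (0:ℝ) ≤ 1 - t)
      (le_of_lt ht0) (by ring)
    simp only [smul_eq_mul] at hcv
    have hsv := hv ((1 - t) • y + t • z)
    have harg : (1 - t) • y + t • z - y = t • (z - y) := by module
    rw [harg, real_inner_smul_right] at hsv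
    have e1 : ‖(1 - t) • y + t • z‖ ^ 2
        = (1 - t) ^ 2 * ‖y‖ ^ 2 + 2 * ((1 - t) * t) * (inner ℝ y z : ℝ) + t ^ 2 * ‖z‖ ^ 2 := by
      simp only [← real_inner_self_eq_norm_sq, inner_add_left, inner_add_right,
        real_inner_smul_left, real_inner_smul_right, real_inner_comm z y]
      ring
    have e2 : ‖z - y‖ ^ 2 = ‖z‖ ^ 2 - 2 * (inner ℝ y z : ℝ) + ‖y‖ ^ 2 := by
      simp only [← real_inner_self_eq_norm_sq, inner_sub_left, inner_sub_right,
        real_inner_comm z y]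
      ring
    rw [e1] at hcv
    have key : t * (g y + inner ℝ v (z - y) + (1 - t) * (μ / 2 * ‖z - y‖ ^ 2)) ≤ t * g z := by
      rw [e2]; nlinarith [hsv, hcv]
    exact le_of_mul_le_mul_left key ht0
  have hc : 0 ≤ μ / 2 * ‖z - y‖ ^ 2 := by positivity
  rcases eq_or_lt_of_le hc with hc0 | hcpos
  · have := core 1 one_pos le_rfl
    rw [← hc0]; rw [← hc0] at this; linarith
  · apply le_of_forall_sub_le
    intro ε hε
    set c := μ / 2 * ‖z - y‖ ^ 2 with hcdef
    set t := min 1 (ε / c) with htdef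
    have ht0 : 0 < t := lt_min one_pos (div_pos hε hcpos)
    have ht1 : t ≤ 1 := min_le_left _ _
    have htc : t * c ≤ ε := by
      calc t * c ≤ ε / c * c := by
            apply mul_le_mul_of_nonneg_right (min_le_right _ _) (le_of_lt hcpos)
        _ = ε := div_mul_cancel₀ ε (ne_of_gt hcpos)
    have := core t ht0 ht1
    nlinarith

lemma wsym_identity {H : Type*} [NormedAddCommGroup H] [InnerProductSpace ℝ H] (Wi : H →L[ℝ] H)
    (hsym : ∀ u v, inner ℝ (Wi u) v = (inner ℝ u (Wi v) : ℝ)) (b c : H) :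
    (inner ℝ (Wi (b - c)) b : ℝ)
      = 1 / 2 * ((inner ℝ b (Wi b) : ℝ) - (inner ℝ c (Wi c) : ℝ) + (inner ℝ (b - c) (Wi (b - c)) : ℝ)) := by
  simp only [map_sub, inner_sub_left, inner_sub_right]
  have h1 := hsym b c
  have h2 := hsym c b
  have h3 := hsym b b
  have h4 := hsym c c
  linarith [real_inner_comm (Wi b) c, real_inner_comm (Wi c) b, real_inner_comm (Wi b) b,
    real_inner_comm (Wi c) c]

lemma count_mem_powersetCard {M m : ℕ} (hm : 1 ≤ m) (i : Fin M) :
    ((Finset.powersetCard m (Finset.univ : Finset (Fin M))).filter (fun S => i ∈ S)).card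
      = (M - 1).choose (m - 1) := by
  have : ((Finset.powersetCard m (Finset.univ : Finset (Fin M))).filter (fun S => i ∈ S)).card
      = (Finset.powersetCard (m - 1) ((Finset.univ : Finset (Fin M)).erase i)).card := by
    refine Finset.card_bij' (fun S _ => S.erase i) (fun T _ => insert i T) ?_ ?_ ?_ ?_
    · intro S hS
      simp only [Finset.mem_filter, Finset.mem_powersetCard] at hS
      simp only [Finset.mem_powersetCard]
      exact ⟨Finset.erase_subset_erase i hS.1.1,
        by rw [Finset.card_erase_of_mem hS.2, hS.1.2]⟩
    · intro T hT
      simp only [Finset.mem_powersetCard] at hT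
      have hiT : i ∉ T := fun h => (Finset.mem_erase.mp (hT.1 h)).1 rfl
      simp only [Finset.mem_filter, Finset.mem_powersetCard]
      refine ⟨⟨Finset.subset_univ _, ?_⟩, Finset.mem_insert_self i T⟩
      rw [Finset.card_insert_of_notMem hiT, hT.2]
      omega
    · intro S hS
      simp only [Finset.mem_filter] at hS
      exact Finset.insert_erase hS.2
    · intro T hT
      simp only [Finset.mem_powersetCard] at hT
      exact Finset.erase_insert (fun h => (Finset.mem_erase.mp (hT.1 h)).1 rfl)
  rw [this, Finset.card_powersetCard, Finset.card_erase_of_mem (Finset.mem_univ i),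
    Finset.card_univ, Fintype.card_fin]

lemma count_real {M m : ℕ} (hm : 1 ≤ m) (hM : m ≤ M) :
    (((M - 1).choose (m - 1) : ℝ)) = (m : ℝ) / (M : ℝ) * (M.choose m : ℝ) := by
  have hM1 : 1 ≤ M := le_trans hm hM
  obtain ⟨M₀, rfl⟩ : ∃ M₀, M = M₀ + 1 := ⟨M - 1, by omega⟩
  obtain ⟨m₀, rfl⟩ : ∃ m₀, m = m₀ + 1 := ⟨m - 1, by omega⟩
  have key : (M₀ + 1) * M₀.choose m₀ = (M₀ + 1).choose (m₀ + 1) * (m₀ + 1) :=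
    Nat.add_one_mul_choose_eq M₀ m₀
  have keyr := congrArg (fun k : ℕ => (k : ℝ)) key
  push_cast at keyr ⊢
  have hMpos : (0:ℝ) < (M₀ : ℝ) + 1 := by positivity
  field_simp
  linarith [keyr]

lemma sum_over_subsets {M m : ℕ} (hm : 1 ≤ m) (a : Fin M → ℝ) :
    ∑ S ∈ Finset.powersetCard m (Finset.univ : Finset (Fin M)), ∑ i ∈ S, a i
      = ((M - 1).choose (m - 1) : ℝ) * ∑ i, a i := by
  calc ∑ S ∈ Finset.powersetCard m (Finset.univ : Finset (Fin M)), ∑ i ∈ S, a i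
      = ∑ S ∈ Finset.powersetCard m (Finset.univ : Finset (Fin M)),
          ∑ i, (if i ∈ S then a i else 0) := by
        refine Finset.sum_congr rfl (fun S _ => ?_)
        rw [Finset.sum_ite_mem, Finset.univ_inter]
    _ = ∑ i, ∑ S ∈ Finset.powersetCard m (Finset.univ : Finset (Fin M)),
          (if i ∈ S then a i else 0) := Finset.sum_comm
    _ = ∑ i : Fin M, (((Finset.powersetCard m (Finset.univ : Finset (Fin M))).filter
          (fun S => i ∈ S)).card : ℝ) * a i := by
        refine Finset.sum_congr rfl (fun i _ => ?_)
        rw [← Finset.sum_filter, Finset.sum_const, nsmul_eq_mul]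
    _ = ((M - 1).choose (m - 1) : ℝ) * ∑ i, a i := by
        rw [Finset.mul_sum]
        exact Finset.sum_congr rfl (fun i _ => by rw [count_mem_powersetCard hm i])

lemma sum_over_compl {M m : ℕ} (hm : 1 ≤ m) (hM : m ≤ M) (a : Fin M → ℝ) :
    ∑ S ∈ Finset.powersetCard m (Finset.univ : Finset (Fin M)), ∑ i ∈ Sᶜ, a i
      = ((M.choose m : ℝ) - ((M - 1).choose (m - 1) : ℝ)) * ∑ i, a i := by
  have hcompl : ∀ S : Finset (Fin M), ∑ i ∈ Sᶜ, a i = (∑ i, a i) - ∑ i ∈ S, a i := by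
    intro S
    rw [eq_sub_iff_add_eq, add_comm, Finset.sum_add_sum_compl]
  simp only [hcompl]
  rw [Finset.sum_sub_distrib, Finset.sum_const, sum_over_subsets hm a,
    Finset.card_powersetCard, Finset.card_univ, Fintype.card_fin, nsmul_eq_mul]
  ring

end Helpers

/-- The product space `∏ i, ℝ^{n i}` with the ℓ² product inner ℝ product. -/
abbrev blockE (M : ℕ) (n : Fin M → ℕ) : Type :=
  PiLp 2 (fun i : Fin M => EuclideanSpace ℝ (Fin (n i)))

set_option maxHeartbeats 1600000 in
/-- Lemma A.1 of the paper (basic block inequality). -/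
theorem stmt_6
    {M m p : ℕ} (hm : 1 ≤ m) (hmM : m ≤ M) {n : Fin M → ℕ}
    (A : ∀ i : Fin M, EuclideanSpace ℝ (Fin (n i)) →L[ℝ] EuclideanSpace ℝ (Fin p))
    (f : blockE M n → ℝ) (Gf : blockE M n → blockE M n)
    (hfconv : ConvexOn ℝ Set.univ f)
    (hfgrad : ∀ z, HasGradientAt f (Gf z) z)
    (Lm : ℝ)
    (hfsmooth : ∀ u w : blockE M n, ∀ S : Finset (Fin M), S.card ≤ m →
      (∀ i ∉ S, u i = w i) →
      f u ≤ f w + inner ℝ (Gf w) (u - w) + Lm / 2 * ‖u - w‖ ^ 2)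
    (gi : ∀ i : Fin M, EuclideanSpace ℝ (Fin (n i)) → ℝ)
    (μ : ℝ) (hμ : 0 ≤ μ)
    (hgi : ∀ i, ConvexOn ℝ Set.univ (fun z => gi i z - μ / 2 * ‖z‖ ^ 2))
    (W : ∀ i : Fin M,
      EuclideanSpace ℝ (Fin (n i)) →L[ℝ] EuclideanSpace ℝ (Fin (n i)))
    (hWsym : ∀ i, ∀ u v, inner ℝ (W i u) v = (inner ℝ u (W i v) : ℝ))
    (hWpsd : ∀ i, ∀ v, (0 : ℝ) ≤ inner ℝ v (W i v))
    (x0 : blockE M n) (lam0 r0 : EuclideanSpace ℝ (Fin p)) (β : ℝ)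
    (xplus : Finset (Fin M) → blockE M n)
    (hfix : ∀ S ∈ Finset.powersetCard m (Finset.univ : Finset (Fin M)),
      ∀ i ∉ S, xplus S i = x0 i)
    (hopt : ∀ S ∈ Finset.powersetCard m (Finset.univ : Finset (Fin M)),
      ∀ i ∈ S, ∃ v : EuclideanSpace ℝ (Fin (n i)),
        (∀ z, gi i (xplus S i) + inner ℝ v (z - xplus S i) ≤ gi i z) ∧
        Gf x0 i + v - ContinuousLinearMap.adjoint (A i) (lam0 - β • r0)
          + W i (xplus S i - x0 i) = 0)
    (x : blockE M n) :
    ((Finset.powersetCard m (Finset.univ : Finset (Fin M))).card : ℝ)⁻¹ *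
      ∑ S ∈ Finset.powersetCard m (Finset.univ : Finset (Fin M)),
        ((f (xplus S) + ∑ i, gi i (xplus S i)) - (f x + ∑ i, gi i (x i))
          + μ / 2 * ‖xplus S - x‖ ^ 2
          - inner ℝ ((∑ i, A i (xplus S i)) - ∑ i, A i (x i)) (lam0 - β • r0))
    ≤ (1 - (m : ℝ) / M) *
        ((f x0 + ∑ i, gi i (x0 i)) - (f x + ∑ i, gi i (x i))
          + μ / 2 * ‖x0 - x‖ ^ 2
          - inner ℝ ((∑ i, A i (x0 i)) - ∑ i, A i (x i)) (lam0 - β • r0))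
      - 1 / 2 * (((Finset.powersetCard m (Finset.univ : Finset (Fin M))).card : ℝ)⁻¹ *
          ∑ S ∈ Finset.powersetCard m (Finset.univ : Finset (Fin M)),
            ((∑ i, (inner ℝ ((xplus S - x) i) (W i ((xplus S - x) i)) : ℝ))
              - (∑ i, (inner ℝ ((x0 - x) i) (W i ((x0 - x) i)) : ℝ))
              + ((∑ i, (inner ℝ ((xplus S - x0) i) (W i ((xplus S - x0) i)) : ℝ))
                  - Lm * ‖xplus S - x0‖ ^ 2))) := by
  classical
  have hsubapp : ∀ (u w : blockE M n) (i : Fin M), (u - w) i = u i - w i := fun _ _ _ => rfl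
  set lt : EuclideanSpace ℝ (Fin p) := lam0 - β • r0 with hltdef
  -- abbreviations
  set hfun : Fin M → ℝ := fun i => gi i (x0 i) - gi i (x i) + μ / 2 * ‖x0 i - x i‖ ^ 2
    - inner ℝ (A i (x0 i) - A i (x i)) lt with hhfun
  set gt : Fin M → ℝ := fun i => (inner ℝ (Gf x0 i) (x i - x0 i) : ℝ) with hgt
  set WT : Finset (Fin M) → ℝ := fun S =>
    (∑ i, (inner ℝ ((xplus S - x) i) (W i ((xplus S - x) i)) : ℝ))
      - (∑ i, (inner ℝ ((x0 - x) i) (W i ((x0 - x) i)) : ℝ))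
      + ((∑ i, (inner ℝ ((xplus S - x0) i) (W i ((xplus S - x0) i)) : ℝ))
          - Lm * ‖xplus S - x0‖ ^ 2) with hWT
  set Φ : Finset (Fin M) → ℝ := fun S =>
    (f (xplus S) + ∑ i, gi i (xplus S i)) - (f x + ∑ i, gi i (x i))
      + μ / 2 * ‖xplus S - x‖ ^ 2
      - inner ℝ ((∑ i, A i (xplus S i)) - ∑ i, A i (x i)) lt with hΦ
  -- key per-S inequality
  have key : ∀ S ∈ Finset.powersetCard m (Finset.univ : Finset (Fin M)),
      Φ S ≤ (f x0 - f x) + (∑ i ∈ S, gt i) + (∑ i ∈ Sᶜ, hfun i) - 1 / 2 * WT S := by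
    intro S hS
    have hScard : S.card = m := (Finset.mem_powersetCard.mp hS).2
    have hSfix : ∀ i ∉ S, xplus S i = x0 i := hfix S hS
    set P : Fin M → ℝ := fun i =>
      gi i (xplus S i) - gi i (x i) + μ / 2 * ‖xplus S i - x i‖ ^ 2
        - inner ℝ (A i (xplus S i) - A i (x i)) lt
        + inner ℝ (Gf x0 i) (xplus S i - x0 i)
        + 1 / 2 * ((inner ℝ (xplus S i - x i) (W i (xplus S i - x i)) : ℝ)
            - (inner ℝ (x0 i - x i) (W i (x0 i - x i)) : ℝ)
            + (inner ℝ (xplus S i - x0 i) (W i (xplus S i - x0 i)) : ℝ)) with hP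
    have hPle : ∀ i, P i ≤ if i ∈ S then gt i else hfun i := by
      intro i
      by_cases hi : i ∈ S
      · rw [if_pos hi]
        obtain ⟨v, hv, heq⟩ := hopt S hS i hi
        have hstrong := strong_subgrad hμ (hgi i) hv (x i)
        have hinner : ∀ u : EuclideanSpace ℝ (Fin (n i)), (inner ℝ v u : ℝ)
            = (inner ℝ lt (A i u) : ℝ) - inner ℝ (Gf x0 i) u
              - inner ℝ (W i (xplus S i - x0 i)) u := by
          intro u
          have h2 : v = ContinuousLinearMap.adjoint (A i) lt - Gf x0 i
              - W i (xplus S i - x0 i)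
              + (Gf x0 i + v - ContinuousLinearMap.adjoint (A i) lt
                  + W i (xplus S i - x0 i)) := by abel
          rw [heq, add_zero] at h2
          rw [h2]
          simp only [inner_sub_left]
          rw [ContinuousLinearMap.adjoint_inner_left]
        have hwid := wsym_identity (W i) (hWsym i) (xplus S i - x i) (x0 i - x i)
        have hbc : (xplus S i - x i) - (x0 i - x i) = xplus S i - x0 i := by abel
        rw [hbc] at hwid
        have hv2 : (inner ℝ v (x i - xplus S i) : ℝ) = - inner ℝ v (xplus S i - x i) := by
          rw [show x i - xplus S i = -(xplus S i - x i) by abel, inner_neg_right]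
        have hnrev : ‖x i - xplus S i‖ = ‖xplus S i - x i‖ := norm_sub_rev _ _
        have hA : (inner ℝ (A i (xplus S i) - A i (x i)) lt : ℝ)
            = inner ℝ lt (A i (xplus S i - x i)) := by
          rw [← map_sub, real_inner_comm]
        have hGf : (inner ℝ (Gf x0 i) (xplus S i - x0 i) : ℝ)
            = inner ℝ (Gf x0 i) (xplus S i - x i) + inner ℝ (Gf x0 i) (x i - x0 i) := by
          rw [← inner_add_right]
          congr 1
          abel
        have hvin := hinner (xplus S i - x i)
        rw [hv2, hnrev] at hstrong
        simp only [hP, hgt]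
        linarith [hstrong, hwid, hA, hGf, hvin]
      · rw [if_neg hi]
        have hxe : xplus S i = x0 i := hSfix i hi
        apply le_of_eq
        simp only [hP, hhfun, hxe, sub_self, inner_zero_left, map_zero, inner_zero_right]
        ring
    have hsum_ite : ∑ i, (if i ∈ S then gt i else hfun i)
        = (∑ i ∈ S, gt i) + (∑ i ∈ Sᶜ, hfun i) := by
      rw [← Finset.sum_add_sum_compl S]
      congr 1
      · exact Finset.sum_congr rfl (fun i hi => if_pos hi)
      · exact Finset.sum_congr rfl (fun i hi => if_neg (Finset.mem_compl.mp hi))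
    have hPsum : ∑ i, P i ≤ (∑ i ∈ S, gt i) + (∑ i ∈ Sᶜ, hfun i) := by
      rw [← hsum_ite]
      exact Finset.sum_le_sum (fun i _ => hPle i)
    have hsm := hfsmooth (xplus S) x0 S (le_of_eq hScard) hSfix
    have hID : Φ S = (f (xplus S) - f x0 - inner ℝ (Gf x0) (xplus S - x0)
          - Lm / 2 * ‖xplus S - x0‖ ^ 2)
        + (f x0 - f x) + (∑ i, P i) - 1 / 2 * WT S := by
      simp only [hΦ, hP, hWT]
      rw [PiLp.norm_sq_eq_of_L2 _ (xplus S - x), PiLp.inner_apply (Gf x0) (xplus S - x0)]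
      rw [← Finset.sum_sub_distrib, sum_inner]
      simp only [hsubapp]
      simp only [Finset.sum_add_distrib, Finset.sum_sub_distrib, ← Finset.mul_sum]
      rw [PiLp.norm_sq_eq_of_L2 _ (xplus S - x0)]
      simp only [hsubapp]
      ring
    rw [hID]
    linarith [hsm, hPsum]
  -- averaging
  have hNnat : (Finset.powersetCard m (Finset.univ : Finset (Fin M))).card = M.choose m := by
    rw [Finset.card_powersetCard, Finset.card_univ, Fintype.card_fin]
  have hNpos : (0:ℝ) < ((Finset.powersetCard m (Finset.univ : Finset (Fin M))).card : ℝ) := by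
    rw [hNnat]
    exact_mod_cast Nat.choose_pos hmM
  have hMR : (0:ℝ) < (M : ℝ) := by
    have : 1 ≤ M := le_trans hm hmM
    exact_mod_cast Nat.lt_of_lt_of_le Nat.zero_lt_one this
  have hsumS : ∑ S ∈ Finset.powersetCard m (Finset.univ : Finset (Fin M)), Φ S
      ≤ ((Finset.powersetCard m (Finset.univ : Finset (Fin M))).card : ℝ) * (f x0 - f x)
        + ((M - 1).choose (m - 1) : ℝ) * (∑ i, gt i)
        + (((Finset.powersetCard m (Finset.univ : Finset (Fin M))).card : ℝ)
            - ((M - 1).choose (m - 1) : ℝ)) * (∑ i, hfun i)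
        - 1 / 2 * ∑ S ∈ Finset.powersetCard m (Finset.univ : Finset (Fin M)), WT S := by
    have hb := Finset.sum_le_sum key
    calc ∑ S ∈ Finset.powersetCard m (Finset.univ : Finset (Fin M)), Φ S
        ≤ ∑ S ∈ Finset.powersetCard m (Finset.univ : Finset (Fin M)),
            ((f x0 - f x) + (∑ i ∈ S, gt i) + (∑ i ∈ Sᶜ, hfun i) - 1 / 2 * WT S) := hb
      _ = ((Finset.powersetCard m (Finset.univ : Finset (Fin M))).card : ℝ) * (f x0 - f x)
            + ((M - 1).choose (m - 1) : ℝ) * (∑ i, gt i)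
            + (((Finset.powersetCard m (Finset.univ : Finset (Fin M))).card : ℝ)
                - ((M - 1).choose (m - 1) : ℝ)) * (∑ i, hfun i)
            - 1 / 2 * ∑ S ∈ Finset.powersetCard m (Finset.univ : Finset (Fin M)), WT S := by
          rw [Finset.sum_sub_distrib, Finset.sum_add_distrib, Finset.sum_add_distrib,
            Finset.sum_const, sum_over_subsets hm gt, sum_over_compl hm hmM hfun,
            nsmul_eq_mul, ← Finset.mul_sum, hNnat]
  -- gradient inequality for f
  have hgrad : ∑ i, gt i ≤ f x - f x0 := by
    have h1 := grad_convex_le hfconv (hfgrad x0) x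
    have h2 : (inner ℝ (Gf x0) (x - x0) : ℝ) = ∑ i, gt i := by
      rw [PiLp.inner_apply (Gf x0) (x - x0)]
      exact Finset.sum_congr rfl (fun i _ => by rw [hgt, hsubapp])
    linarith
  -- identify RHS bracket
  have hbr : (f x0 + ∑ i, gi i (x0 i)) - (f x + ∑ i, gi i (x i))
      + μ / 2 * ‖x0 - x‖ ^ 2
      - inner ℝ ((∑ i, A i (x0 i)) - ∑ i, A i (x i)) lt
      = (f x0 - f x) + ∑ i, hfun i := by
    simp only [hhfun]
    rw [PiLp.norm_sq_eq_of_L2 _ (x0 - x), ← Finset.sum_sub_distrib, sum_inner]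
    simp only [hsubapp]
    simp only [Finset.sum_add_distrib, Finset.sum_sub_distrib, ← Finset.mul_sum]
    ring
  -- count identity in ℝ
  have hcnt : ((M - 1).choose (m - 1) : ℝ)
      = (m : ℝ) / M * ((Finset.powersetCard m (Finset.univ : Finset (Fin M))).card : ℝ) := by
    rw [hNnat]
    exact count_real hm hmM
  have hθ0 : 0 ≤ (m : ℝ) / M := by positivity
  have hθ1 : (m : ℝ) / M ≤ 1 := by
    rw [div_le_one hMR]
    exact_mod_cast hmM
  -- final combination
  rw [hbr]
  set N : ℝ := ((Finset.powersetCard m (Finset.univ : Finset (Fin M))).card : ℝ) with hN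
  have hmain : N⁻¹ * ∑ S ∈ Finset.powersetCard m (Finset.univ : Finset (Fin M)), Φ S
      ≤ (f x0 - f x) + (m : ℝ) / M * (∑ i, gt i) + (1 - (m : ℝ) / M) * (∑ i, hfun i)
        - 1 / 2 * (N⁻¹ * ∑ S ∈ Finset.powersetCard m (Finset.univ : Finset (Fin M)), WT S) := by
    have := mul_le_mul_of_nonneg_left hsumS (le_of_lt (inv_pos.mpr hNpos))
    calc N⁻¹ * ∑ S ∈ Finset.powersetCard m (Finset.univ : Finset (Fin M)), Φ S
        ≤ N⁻¹ * (N * (f x0 - f x)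
            + ((M - 1).choose (m - 1) : ℝ) * (∑ i, gt i)
            + (N - ((M - 1).choose (m - 1) : ℝ)) * (∑ i, hfun i)
            - 1 / 2 * ∑ S ∈ Finset.powersetCard m (Finset.univ : Finset (Fin M)), WT S) := this
      _ = (f x0 - f x) + (m : ℝ) / M * (∑ i, gt i) + (1 - (m : ℝ) / M) * (∑ i, hfun i)
            - 1 / 2 * (N⁻¹ * ∑ S ∈ Finset.powersetCard m (Finset.univ : Finset (Fin M)), WT S) := by
          rw [hcnt]
          have hNN : N⁻¹ * N = 1 := inv_mul_cancel₀ (ne_of_gt hNpos)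
          linear_combination (f x0 - f x + (m : ℝ) / M * (∑ i, gt i)
            + (1 - (m : ℝ) / M) * (∑ i, hfun i)) * hNN
  have hfinal : (f x0 - f x) + (m : ℝ) / M * (∑ i, gt i)
      ≤ (1 - (m : ℝ) / M) * (f x0 - f x) := by
    have := mul_le_mul_of_nonneg_left hgrad hθ0
    nlinarith
  have hrhs : (1 - (m : ℝ) / M) * ((f x0 - f x) + ∑ i, hfun i)
      = (1 - (m : ℝ) / M) * (f x0 - f x) + (1 - (m : ℝ) / M) * (∑ i, hfun i) := by ring
  rw [hrhs]
  linarith [hmain, hfinal]
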